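/- Let μ be a compactly supported probability measure on ℝ with support contained in [a,b], σ = b - a, and let x_0 = a and x_i (for i = 1,…,N-1) be the quantiles defined by μ((-∞, x_i]) = i/N. Then for every Lipschitz function ξ : ℝ → ℝ, |∫ℝ ξ dμ - (1/N)Σ_{i=0}^{N-1} ξ(x_i)| ≤ σ·Lip(ξ)/N. In particular W₁(μ, (1/N)Σ_{i=0}^{N-1} δ_{x_i}) ≤ σ/N. -/

import Mathlib

open MeasureTheory Set

noncomputable section

/-- The Monge–Kantorovich–Rubinstein (Wasserstein-1) distance, via its dual
(Lipschitz) formulation. -/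
def W1 {E : Type*} [MeasurableSpace E] [PseudoMetricSpace E]
    (μ ν : Measure E) : ℝ :=
  sSup { r | ∃ ξ : E → ℝ, LipschitzWith 1 ξ ∧ r = |∫ z, ξ z ∂μ - ∫ z, ξ z ∂ν| }

theorem stmt_9 (μ : Measure ℝ) [IsProbabilityMeasure μ]
    (a b : ℝ) (hsupp : μ (Icc a b)ᶜ = 0) (hσ : 0 < b - a)
    (N : ℕ) (hN : 0 < N)
    (x : Fin N → ℝ) (hx0 : x ⟨0, hN⟩ = a)
    (hquant : ∀ i : Fin N, (i : ℕ) ≠ 0 → μ (Iic (x i)) = ENNReal.ofReal ((i : ℕ) / N)) :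
    (∀ (ξ : ℝ → ℝ) (K : NNReal), LipschitzWith K ξ →
      |∫ z, ξ z ∂μ - (1 / (N : ℝ)) * ∑ i, ξ (x i)| ≤ (b - a) * K / N) ∧
    W1 μ ((N : ENNReal)⁻¹ • ∑ i, Measure.dirac (x i)) ≤ (b - a) / N := by
  have hab : a ≤ b := by linarith
  have hN' : (0 : ℝ) < N := by exact_mod_cast hN
  set y : ℕ → ℝ := fun i => if h : i < N then x ⟨i, h⟩ else b with hy
  have hy0 : y 0 = a := by simp only [hy, dif_pos hN]; exact hx0
  have hyN : y N = b := by simp [hy]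
  have hIoi : μ (Ioi b) = 0 := by
    refine measure_mono_null (fun z hz => ?_) hsupp
    simp only [mem_Ioi] at hz
    simp only [mem_compl_iff, mem_Icc, not_and, not_le]
    intro _
    exact hz
  have hIio : μ (Iio a) = 0 := by
    refine measure_mono_null (fun z hz => ?_) hsupp
    simp only [mem_Iio] at hz
    simp only [mem_compl_iff, mem_Icc, not_and, not_le]
    intro h
    linarith
  have hae : ∀ᵐ z ∂μ, z ∈ Icc a b := by
    rw [ae_iff]; exact hsupp
  -- quantile values of y
  have hμIic : ∀ i : ℕ, 0 < i → i ≤ N → μ (Iic (y i)) = ENNReal.ofReal (i / N) := by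
    intro i h1 h2
    rcases lt_or_eq_of_le h2 with h | h
    · have hyi : y i = x ⟨i, h⟩ := dif_pos h
      rw [hyi, hquant ⟨i, h⟩ (by simpa using h1.ne')]
    · subst h
      rw [hyN]
      have hb1 : μ (Iic b) = 1 := by
        refine (prob_compl_eq_zero_iff measurableSet_Iic).1 ?_
        rw [compl_Iic]; exact hIoi
      rw [hb1, div_self hN'.ne', ENNReal.ofReal_one]
  have hμy1 : μ (Iic (y 1)) = ENNReal.ofReal (1 / N) := by
    simpa using hμIic 1 one_pos hN
  -- adjacent monotonicity
  have hmono : ∀ i : ℕ, i < N → y i ≤ y (i + 1) := by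
    intro i hi
    by_contra hlt
    push_neg at hlt
    rcases Nat.eq_zero_or_pos i with rfl | hpos
    · have h0 : μ (Iic (y 1)) = 0 := by
        refine measure_mono_null (fun z hz => ?_) hIio
        simp only [mem_Iic] at hz
        simp only [mem_Iio]
        have hya : y 1 < a := by rw [← hy0]; exact hlt
        linarith
      rw [h0] at hμy1
      have : (0:ℝ) < 1 / N := by positivity
      rw [eq_comm, ENNReal.ofReal_eq_zero] at hμy1
      linarith
    · have hA := hμIic i hpos hi.le
      have hB := hμIic (i + 1) (Nat.succ_pos i) hi
      have hle : μ (Iic (y (i + 1))) ≤ μ (Iic (y i)) :=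
        measure_mono (Iic_subset_Iic.2 hlt.le)
      rw [hA, hB] at hle
      have h2 := (ENNReal.ofReal_le_ofReal_iff (by positivity)).1 hle
      have hii : ((i : ℝ) + 1) / N ≤ (i : ℝ) / N := by push_cast at h2 ⊢; linarith
      have := (div_le_div_iff_of_pos_right hN').1 hii
      linarith
  -- the partition slabs
  set S : ℕ → Set ℝ := fun i => if i = 0 then Icc a (y 1) else Ioc (y i) (y (i + 1)) with hS
  have hS0ae : Iic (y 1) =ᵐ[μ] Icc a (y 1) := by
    rw [MeasureTheory.ae_eq_set]
    constructor
    · refine measure_mono_null (fun z hz => ?_) hIio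
      rcases hz with ⟨hz1, hz2⟩
      simp only [mem_Icc, not_and, not_le] at hz2
      by_contra h
      simp only [mem_Iio, not_lt] at h
      exact absurd hz1 (not_le.2 (hz2 h))
    · refine measure_mono_null (fun z hz => (hz.2 hz.1.2).elim) (measure_empty (μ := μ))
  have hμS : ∀ i : ℕ, i < N → μ (S i) = ENNReal.ofReal (1 / N) := by
    intro i hi
    rcases Nat.eq_zero_or_pos i with rfl | hpos
    · rw [show S 0 = Icc a (y 1) from if_pos rfl, ← measure_congr hS0ae, hμy1]
    · have key : μ (Iic (y i)) + μ (Ioc (y i) (y (i + 1))) = μ (Iic (y (i + 1))) := by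
        rw [← measure_union (Iic_disjoint_Ioc le_rfl) measurableSet_Ioc,
          Iic_union_Ioc_eq_Iic (hmono i hi)]
      rw [hμIic i hpos hi.le, hμIic (i + 1) (Nat.succ_pos i) hi] at key
      have hsplit : ENNReal.ofReal (((i : ℕ) + 1 : ℕ) / N) =
          ENNReal.ofReal ((i : ℕ) / N) + ENNReal.ofReal (1 / N) := by
        rw [← ENNReal.ofReal_add (by positivity) (by positivity)]
        congr 1
        push_cast
        ring
      rw [hsplit] at key
      have := (ENNReal.add_right_inj ENNReal.ofReal_ne_top).1 key
      rw [show S i = Ioc (y i) (y (i + 1)) from if_neg hpos.ne', this]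
  have hμSreal : ∀ i : ℕ, i < N → (μ (S i)).toReal = 1 / N := by
    intro i hi
    rw [hμS i hi, ENNReal.toReal_ofReal (by positivity)]
  have hSfin : ∀ i : ℕ, μ (S i) < ⊤ := fun i => measure_lt_top μ _
  have hxy : ∀ i : Fin N, x i = y (i : ℕ) := by
    intro i
    simp only [hy, dif_pos i.isLt]
  -- Part 1
  have part1 : ∀ (ξ : ℝ → ℝ) (K : NNReal), LipschitzWith K ξ →
      |∫ z, ξ z ∂μ - (1 / (N : ℝ)) * ∑ i, ξ (x i)| ≤ (b - a) * K / N := by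
    intro ξ K hK
    have hcont : Continuous ξ := hK.continuous
    have hint : Integrable ξ μ := by
      refine Integrable.mono' (integrable_const (|ξ a| + K * (b - a)))
        hcont.aestronglyMeasurable ?_
      filter_upwards [hae] with z hz
      have h1 : |ξ z - ξ a| ≤ K * |z - a| := by
        have := hK.dist_le_mul z a
        rwa [Real.dist_eq, Real.dist_eq] at this
      have h2 : |z - a| ≤ b - a := by
        rw [abs_of_nonneg (by linarith [hz.1])]
        linarith [hz.2]
      have : |ξ z| ≤ |ξ z - ξ a| + |ξ a| := by
        calc |ξ z| = |ξ z - ξ a + ξ a| := by ring_nf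
        _ ≤ |ξ z - ξ a| + |ξ a| := abs_add_le _ _
      have hK0 : (0:ℝ) ≤ K := K.coe_nonneg
      calc ‖ξ z‖ = |ξ z| := rfl
        _ ≤ |ξ z - ξ a| + |ξ a| := this
        _ ≤ K * (b - a) + |ξ a| := by nlinarith
        _ = |ξ a| + K * (b - a) := by ring
    -- decomposition of the integral
    have hsum : ∀ k : ℕ, 0 < k → k ≤ N →
        ∫ z in Iic (y k), ξ z ∂μ = ∑ i ∈ Finset.range k, ∫ z in S i, ξ z ∂μ := by
      intro k
      induction k with
      | zero => omega
      | succ n ih =>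
        intro _ hnN
        rcases Nat.eq_zero_or_pos n with rfl | hp
        · rw [Finset.sum_range_one, show S 0 = Icc a (y 1) from if_pos rfl,
            Measure.restrict_congr_set hS0ae]
        · rw [Finset.sum_range_succ, ← ih hp (by omega),
            show S n = Ioc (y n) (y (n + 1)) from if_neg hp.ne',
            ← Iic_union_Ioc_eq_Iic (hmono n (by omega))]
          exact setIntegral_union (Iic_disjoint_Ioc le_rfl) measurableSet_Ioc
            hint.integrableOn hint.integrableOn
    have hdecomp : ∫ z, ξ z ∂μ = ∑ i ∈ Finset.range N, ∫ z in S i, ξ z ∂μ := by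
      rw [← hsum N hN le_rfl]
      congr 1
      refine (Measure.restrict_eq_self_of_ae_mem ?_).symm
      filter_upwards [hae] with z hz
      rw [hyN]
      exact hz.2
    -- bound on each term
    have hterm : ∀ i ∈ Finset.range N,
        |∫ z in S i, ξ z ∂μ - 1 / N * ξ (y i)| ≤ K * (y (i + 1) - y i) / N := by
      intro i hi
      rw [Finset.mem_range] at hi
      have hconst : (1 : ℝ) / N * ξ (y i) = ∫ _ in S i, ξ (y i) ∂μ := by
        rw [setIntegral_const, measureReal_def, hμSreal i hi, smul_eq_mul]
      rw [hconst, ← integral_sub hint.integrableOn (integrable_const _).integrableOn]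
      have hbound : ∀ z ∈ S i, ‖ξ z - ξ (y i)‖ ≤ K * (y (i + 1) - y i) := by
        intro z hz
        have hd : ‖ξ z - ξ (y i)‖ ≤ K * |z - y i| := by
          have := hK.dist_le_mul z (y i)
          rwa [Real.dist_eq, Real.dist_eq] at this
        have habs : |z - y i| ≤ y (i + 1) - y i := by
          rcases Nat.eq_zero_or_pos i with rfl | hpos
          · rw [show S 0 = Icc a (y 1) from if_pos rfl] at hz
            rw [hy0, abs_of_nonneg (by linarith [hz.1])]
            linarith [hz.2]
          · rw [show S i = Ioc (y i) (y (i + 1)) from if_neg hpos.ne'] at hz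
            rw [abs_of_nonneg (by linarith [hz.1])]
            linarith [hz.2]
        calc ‖ξ z - ξ (y i)‖ ≤ K * |z - y i| := hd
          _ ≤ K * (y (i + 1) - y i) := by
              exact mul_le_mul_of_nonneg_left habs K.coe_nonneg
      calc |∫ z in S i, (ξ z - ξ (y i)) ∂μ|
          ≤ K * (y (i + 1) - y i) * (μ (S i)).toReal :=
            norm_setIntegral_le_of_norm_le_const (hSfin i) hbound
        _ = K * (y (i + 1) - y i) / N := by rw [hμSreal i hi]; ring
    -- put it together
    have hsumx : ∑ i, ξ (x i) = ∑ i ∈ Finset.range N, ξ (y i) := by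
      rw [← Fin.sum_univ_eq_sum_range (fun i => ξ (y i)) N]
      exact Finset.sum_congr rfl fun i _ => by rw [hxy i]
    rw [hsumx, hdecomp, Finset.mul_sum, ← Finset.sum_sub_distrib]
    calc |∑ i ∈ Finset.range N, (∫ z in S i, ξ z ∂μ - 1 / N * ξ (y i))|
        ≤ ∑ i ∈ Finset.range N, |∫ z in S i, ξ z ∂μ - 1 / N * ξ (y i)| :=
          Finset.abs_sum_le_sum_abs _ _
      _ ≤ ∑ i ∈ Finset.range N, K * (y (i + 1) - y i) / N := Finset.sum_le_sum hterm
      _ = (K / N) * ∑ i ∈ Finset.range N, (y (i + 1) - y i) := by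
          rw [Finset.mul_sum]; exact Finset.sum_congr rfl fun i _ => by ring
      _ = (K / N) * (b - a) := by rw [Finset.sum_range_sub y N, hyN, hy0]
      _ = (b - a) * K / N := by ring
  refine ⟨part1, ?_⟩
  -- Part 2
  have hν : ∀ ξ : ℝ → ℝ, Continuous ξ →
      ∫ z, ξ z ∂((N : ENNReal)⁻¹ • ∑ i, Measure.dirac (x i)) =
        (1 / (N : ℝ)) * ∑ i, ξ (x i) := by
    intro ξ hc
    rw [integral_smul_measure, integral_finset_sum_measure]
    · simp only [integral_dirac, ENNReal.toReal_inv, ENNReal.toReal_natCast, smul_eq_mul,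
        one_div]
    · intro i _
      refine (integrable_const (ξ (x i))).congr ?_
      rw [Filter.EventuallyEq, MeasureTheory.ae_dirac_eq]
      simp
  refine Real.sSup_le ?_ (div_nonneg hσ.le (Nat.cast_nonneg N))
  rintro r ⟨ξ, hL, rfl⟩
  rw [hν ξ hL.continuous]
  have := part1 ξ 1 hL
  simpa using this

end
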